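/- Let θ ∈ ℝ and c ∈ ℂ with |c| < 1, and define γ : ℂ → ℂ by γ(z) = e^{iθ}·(z + c)/(conj(c)·z + 1). Then for all ξ, ζ ∈ ℂ with |ξ| = 1, |ζ| = 1 and ξ ≠ ζ, one has 2·log|γ(ξ) − γ(ζ)| = 2·log|ξ − ζ| + log( |deriv γ (ξ)| · |deriv γ (ζ)| ). Equivalently, setting L(x, y) := 2·log|x − y| for distinct points x, y of the unit circle, the Möbius automorphism γ of the unit disk satisfies L(γ(ξ), γ(ζ)) = L(ξ, ζ) + log(|γ'(ξ)|·|γ'(ζ)|). -/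

import Mathlib

open Real Set Complex

lemma denom_ne_zero_aux (c : ℂ) (hc : ‖c‖ < 1) (z : ℂ)
    (hz : ‖z‖ = 1) : (starRingEnd ℂ) c * z + 1 ≠ 0 := by
  intro h
  have h1 : (starRingEnd ℂ) c * z = -1 := by linear_combination h
  have : ‖(starRingEnd ℂ) c * z‖ = 1 := by
    rw [h1]; simp
  rw [norm_mul, Complex.norm_conj, hz, mul_one] at this
  linarith

lemma deriv_mobius (θ : ℝ) (c : ℂ) (γ : ℂ → ℂ)
    (hγ : ∀ z : ℂ, γ z = Complex.exp (θ * Complex.I) * (z + c) /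
      ((starRingEnd ℂ) c * z + 1))
    (z : ℂ) (hz : (starRingEnd ℂ) c * z + 1 ≠ 0) :
    deriv γ z = Complex.exp (θ * Complex.I) * (1 - (starRingEnd ℂ) c * c) /
      ((starRingEnd ℂ) c * z + 1) ^ 2 := by
  have hγ' : γ = fun z => Complex.exp (θ * Complex.I) * (z + c) /
      ((starRingEnd ℂ) c * z + 1) := funext hγ
  have hu : HasDerivAt (fun z : ℂ => Complex.exp (θ * Complex.I) * (z + c))
      (Complex.exp (θ * Complex.I)) z := by
    simpa using ((hasDerivAt_id z).add_const c).const_mul (Complex.exp (θ * Complex.I))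
  have hv : HasDerivAt (fun z : ℂ => (starRingEnd ℂ) c * z + 1)
      ((starRingEnd ℂ) c) z := by
    simpa using ((hasDerivAt_id z).const_mul ((starRingEnd ℂ) c)).add_const 1
  have := (hu.div hv hz).deriv
  simp only [Pi.div_def] at this
  rw [hγ', this]
  rw [div_eq_div_iff (pow_ne_zero 2 hz) (pow_ne_zero 2 hz)]
  ring

theorem renormalized_length_mobius
    (θ : ℝ) (c : ℂ) (hc : ‖c‖ < 1)
    (γ : ℂ → ℂ)
    (hγ : ∀ z : ℂ, γ z = Complex.exp (θ * Complex.I) * (z + c) /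
      ((starRingEnd ℂ) c * z + 1)) :
    ∀ ξ ζ : ℂ, ‖ξ‖ = 1 → ‖ζ‖ = 1 → ξ ≠ ζ →
      2 * Real.log ‖γ ξ - γ ζ‖ =
        2 * Real.log ‖ξ - ζ‖ +
          Real.log (‖deriv γ ξ‖ * ‖deriv γ ζ‖) := by
  intro ξ ζ hξ hζ hne
  have hdξ := denom_ne_zero_aux c hc ξ hξ
  have hdζ := denom_ne_zero_aux c hc ζ hζ
  have hK : (1 : ℂ) - (starRingEnd ℂ) c * c ≠ 0 := by
    intro h
    have h1 : (starRingEnd ℂ) c * c = 1 := by linear_combination -h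
    have : ‖(starRingEnd ℂ) c * c‖ = 1 := by rw [h1]; simp
    rw [norm_mul, Complex.norm_conj] at this
    nlinarith [norm_nonneg c]
  -- difference formula
  have hdiff : γ ξ - γ ζ = Complex.exp (θ * Complex.I) * (ξ - ζ) *
      (1 - (starRingEnd ℂ) c * c) /
      (((starRingEnd ℂ) c * ξ + 1) * ((starRingEnd ℂ) c * ζ + 1)) := by
    rw [hγ ξ, hγ ζ]
    rw [div_sub_div _ _ hdξ hdζ, div_eq_div_iff (mul_ne_zero hdξ hdζ) (mul_ne_zero hdξ hdζ)]
    ring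
  have hDξ := deriv_mobius θ c γ hγ ξ hdξ
  have hDζ := deriv_mobius θ c γ hγ ζ hdζ
  set K : ℝ := ‖1 - (starRingEnd ℂ) c * c‖ with hKdef
  set aξ : ℝ := ‖(starRingEnd ℂ) c * ξ + 1‖ with haξ
  set aζ : ℝ := ‖(starRingEnd ℂ) c * ζ + 1‖ with haζ
  have hKpos : 0 < K := norm_pos_iff.mpr hK
  have haξpos : 0 < aξ := norm_pos_iff.mpr hdξ
  have haζpos : 0 < aζ := norm_pos_iff.mpr hdζ
  have hxz : 0 < ‖ξ - ζ‖ := norm_pos_iff.mpr (sub_ne_zero.mpr hne)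
  have habs1 : ‖Complex.exp (θ * Complex.I)‖ = 1 := by
    simpa using Complex.norm_exp (θ * Complex.I)
  have hAd : ‖γ ξ - γ ζ‖ = ‖ξ - ζ‖ * K / (aξ * aζ) := by
    rw [hdiff, norm_div, norm_mul, norm_mul, norm_mul, habs1, one_mul]
  have hDξa : ‖deriv γ ξ‖ = K / aξ ^ 2 := by
    rw [hDξ, norm_div, norm_mul, habs1, one_mul, norm_pow]
  have hDζa : ‖deriv γ ζ‖ = K / aζ ^ 2 := by
    rw [hDζ, norm_div, norm_mul, habs1, one_mul, norm_pow]
  rw [hAd, hDξa, hDζa]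
  rw [Real.log_div (by positivity) (by positivity), Real.log_mul (by positivity) (by positivity),
    Real.log_mul (by positivity) (by positivity),
    Real.log_mul (by positivity) (by positivity),
    Real.log_div (by positivity) (by positivity),
    Real.log_div (by positivity) (by positivity),
    Real.log_pow, Real.log_pow]
  ring
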